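/- For every real n ≥ 2 and d, η, γ, b_i > 0, the source-node frequency variance q_{ω,ii} = b_i²/(2dη) − (n−1)γ b_i²/(d n(2d² + γηn)) satisfies the lower bound q_{ω,ii} ≥ [1/(2dη) − γ/(d(√(γη) + √(γη + 2d²))²)] b_i². -/
import Mathlib


/-- Lower bound on the source-node frequency variance for any real `n ≥ 2`. -/
theorem stmt_14 (d η γ b n : ℝ) (hd : 0 < d) (hη : 0 < η) (hγ : 0 < γ) (hn : 2 ≤ n) :
    (1 / (2 * d * η)
        - γ / (d * (Real.sqrt (γ * η) + Real.sqrt (γ * η + 2 * d ^ 2)) ^ 2)) * b ^ 2 ≤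
      b ^ 2 / (2 * d * η) - (n - 1) * γ * b ^ 2 / (d * n * (2 * d ^ 2 + γ * η * n)) := by
  set sa := Real.sqrt (γ * η) with hsa
  set sc := Real.sqrt (γ * η + 2 * d ^ 2) with hsc
  have ha : 0 < γ * η := mul_pos hγ hη
  have hc : 0 < γ * η + 2 * d ^ 2 := by positivity
  have hsa2 : sa ^ 2 = γ * η := Real.sq_sqrt ha.le
  have hsc2 : sc ^ 2 = γ * η + 2 * d ^ 2 := Real.sq_sqrt hc.le
  have hsapos : 0 ≤ sa := Real.sqrt_nonneg _
  have hscpos : 0 < sc := Real.sqrt_pos.mpr hc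
  have hsum : 0 < sa + sc := by linarith
  have e1 : sa ^ 2 * (n - 1) ^ 2 = γ * η * (n - 1) ^ 2 := by rw [hsa2]
  have key : (n - 1) * (sa + sc) ^ 2 ≤ n * (2 * d ^ 2 + γ * η * n) := by
    nlinarith [sq_nonneg (sa * (n - 1) - sc), mul_nonneg hsapos hscpos.le]
  have hn0 : 0 < n := by linarith
  have hden1 : 0 < d * n * (2 * d ^ 2 + γ * η * n) :=
    mul_pos (mul_pos hd hn0) (by nlinarith)
  have hden2 : 0 < d * (sa + sc) ^ 2 := by positivity
  have h1 : (n - 1) * γ * b ^ 2 / (d * n * (2 * d ^ 2 + γ * η * n)) ≤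
      γ * b ^ 2 / (d * (sa + sc) ^ 2) := by
    rw [div_le_div_iff₀ hden1 hden2]
    have hb : 0 ≤ b ^ 2 := sq_nonneg b
    have := mul_le_mul_of_nonneg_left key (by positivity : (0:ℝ) ≤ γ * b ^ 2 * d)
    nlinarith
  have h2 : γ / (d * (sa + sc) ^ 2) * b ^ 2 = γ * b ^ 2 / (d * (sa + sc) ^ 2) := by ring
  have h3 : (1 / (2 * d * η)) * b ^ 2 = b ^ 2 / (2 * d * η) := by ring
  nlinarith [h1]
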